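/- The variance of the excedance statistic on a conjugacy class satisfies R(exc²) − (R exc)² = (n − m_1 − 2m_2)/12 as functions on S_n, where m_1(w) and m_2(w) are the numbers of fixed points and of 2-cycles of w. In particular, the variance of exc on the conjugacy class of cycle type λ in S_n is (n − m_1(λ) − 2 m_2(λ))/12. -/

import Mathlib

open Finset

/-- The excedance statistic: `exc(w) = #{i : w(i) > i}`. -/
def excStat {n : ℕ} (w : Equiv.Perm (Fin n)) : ℕ :=
  (Finset.univ.filter (fun i : Fin n => i < w i)).card

/-- The cycles (orbits) of a permutation of `Fin n` (fixed points count as 1-cycles). -/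
def cyclesOf {n : ℕ} (w : Equiv.Perm (Fin n)) : Finset (Finset (Fin n)) :=
  Finset.image (fun i => Finset.univ.filter (fun j => w.SameCycle i j)) Finset.univ

/-- `m_i(w)`: the number of cycles of length `i` of the permutation `w`. -/
def numCycLen {n : ℕ} (w : Equiv.Perm (Fin n)) (i : ℕ) : ℕ :=
  ((cyclesOf w).filter (fun C => C.card = i)).card


open Equiv

section VarianceAux
variable {n : ℕ}


def Pat (a b c : Fin n) : Finset (Perm (Fin n)) :=
  univ.filter (fun v => v⁻¹ a < v⁻¹ b ∧ v⁻¹ b < v⁻¹ c)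

lemma card_shift (g : Perm (Fin n)) (p q : Perm (Fin n) → Prop) [DecidablePred p] [DecidablePred q]
    (h : ∀ v, p v ↔ q (g * v)) :
    (univ.filter p).card = (univ.filter q).card := by
  apply Finset.card_bij (fun v _ => g * v)
  · intro v hv
    simp only [mem_filter, mem_univ, true_and] at *
    exact (h v).1 hv
  · intro v _ v' _ e
    exact mul_left_cancel e
  · intro u hu
    refine ⟨g⁻¹ * u, ?_, by group⟩
    simp only [mem_filter, mem_univ, true_and] at *
    rw [h]
    simpa [mul_inv_cancel_left] using hu

lemma pat_shift (g : Perm (Fin n)) (a b c : Fin n) :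
    (Pat a b c).card = (Pat (g a) (g b) (g c)).card := by
  apply card_shift g
  intro v
  simp [Pat, mul_inv_rev, Equiv.Perm.mul_apply]

lemma split_card (s : Finset (Perm (Fin n))) (p q : Perm (Fin n) → Prop)
    [DecidablePred p] [DecidablePred q] :
    (s.filter p).card = (s.filter fun v => p v ∧ q v).card + (s.filter fun v => p v ∧ ¬ q v).card := by
  rw [← Finset.card_filter_add_card_filter_not (s := s.filter p) (p := q),
    Finset.filter_filter, Finset.filter_filter]

lemma card_sixth (a b c : Fin n) (hab : a ≠ b) (hbc : b ≠ c) (hac : a ≠ c) :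
    6 * (Pat a b c).card = n.factorial := by
  have inj : ∀ (v : Perm (Fin n)) (x y : Fin n), x ≠ y → v⁻¹ x ≠ v⁻¹ y :=
    fun v x y h e => h (v⁻¹.injective e)
  -- trichotomy rewrite helper
  have tri : ∀ (v : Perm (Fin n)) (x y : Fin n), x ≠ y → (¬ v⁻¹ x < v⁻¹ y ↔ v⁻¹ y < v⁻¹ x) := by
    intro v x y h
    constructor
    · intro hh; exact lt_of_le_of_ne (not_lt.1 hh) (Ne.symm (inj v x y h))
    · exact fun hh => not_lt.2 hh.le
  -- split chain
  have c0 : (univ : Finset (Perm (Fin n))).card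
      = (univ.filter (fun v : Perm (Fin n) => v⁻¹ a < v⁻¹ b)).card
      + (univ.filter (fun v : Perm (Fin n) => v⁻¹ b < v⁻¹ a)).card := by
    rw [← Finset.card_filter_add_card_filter_not
      (s := (univ : Finset (Perm (Fin n)))) (p := fun v => v⁻¹ a < v⁻¹ b)]
    congr 2
    apply filter_congr; intro v _; simp only [tri v a b hab]
  have c1 : (univ.filter (fun v : Perm (Fin n) => v⁻¹ a < v⁻¹ b)).card
      = (Pat a b c).card + (Pat a c b).card + (Pat c a b).card := by
    have i1 : ∀ v : Perm (Fin n),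
        ((v⁻¹ a < v⁻¹ b ∧ ¬ v⁻¹ b < v⁻¹ c) ∧ v⁻¹ a < v⁻¹ c) ↔ (v⁻¹ a < v⁻¹ c ∧ v⁻¹ c < v⁻¹ b) := by
      intro v
      rw [tri v b c hbc]
      exact ⟨fun ⟨⟨_, h2⟩, h3⟩ => ⟨h3, h2⟩, fun ⟨h1, h2⟩ => ⟨⟨h1.trans h2, h2⟩, h1⟩⟩
    have i2 : ∀ v : Perm (Fin n),
        ((v⁻¹ a < v⁻¹ b ∧ ¬ v⁻¹ b < v⁻¹ c) ∧ ¬ v⁻¹ a < v⁻¹ c) ↔ (v⁻¹ c < v⁻¹ a ∧ v⁻¹ a < v⁻¹ b) := by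
      intro v
      rw [tri v b c hbc, tri v a c hac]
      exact ⟨fun ⟨⟨h1, _⟩, h3⟩ => ⟨h3, h1⟩, fun ⟨h1, h2⟩ => ⟨⟨h2, h1.trans h2⟩, h1⟩⟩
    rw [split_card univ (fun v => v⁻¹ a < v⁻¹ b) (fun v => v⁻¹ b < v⁻¹ c),
      split_card univ (fun v => v⁻¹ a < v⁻¹ b ∧ ¬ v⁻¹ b < v⁻¹ c) (fun v => v⁻¹ a < v⁻¹ c),
      filter_congr (fun v _ => i1 v), filter_congr (fun v _ => i2 v)]
    simp only [Pat]
    ring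
  have c2 : (univ.filter (fun v : Perm (Fin n) => v⁻¹ b < v⁻¹ a)).card
      = (Pat b a c).card + (Pat b c a).card + (Pat c b a).card := by
    have i1 : ∀ v : Perm (Fin n),
        ((v⁻¹ b < v⁻¹ a ∧ ¬ v⁻¹ a < v⁻¹ c) ∧ v⁻¹ b < v⁻¹ c) ↔ (v⁻¹ b < v⁻¹ c ∧ v⁻¹ c < v⁻¹ a) := by
      intro v
      rw [tri v a c hac]
      exact ⟨fun ⟨⟨_, h2⟩, h3⟩ => ⟨h3, h2⟩, fun ⟨h1, h2⟩ => ⟨⟨h1.trans h2, h2⟩, h1⟩⟩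
    have i2 : ∀ v : Perm (Fin n),
        ((v⁻¹ b < v⁻¹ a ∧ ¬ v⁻¹ a < v⁻¹ c) ∧ ¬ v⁻¹ b < v⁻¹ c) ↔ (v⁻¹ c < v⁻¹ b ∧ v⁻¹ b < v⁻¹ a) := by
      intro v
      rw [tri v a c hac, tri v b c hbc]
      exact ⟨fun ⟨⟨h1, _⟩, h3⟩ => ⟨h3, h1⟩, fun ⟨h1, h2⟩ => ⟨⟨h2, h1.trans h2⟩, h1⟩⟩
    rw [split_card univ (fun v => v⁻¹ b < v⁻¹ a) (fun v => v⁻¹ a < v⁻¹ c),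
      split_card univ (fun v => v⁻¹ b < v⁻¹ a ∧ ¬ v⁻¹ a < v⁻¹ c) (fun v => v⁻¹ b < v⁻¹ c),
      filter_congr (fun v _ => i1 v), filter_congr (fun v _ => i2 v)]
    simp only [Pat]
    ring
  -- pattern equalities
  have pacb : (Pat a b c).card = (Pat a c b).card := by
    have := pat_shift (Equiv.swap b c) a b c
    rwa [Equiv.swap_apply_of_ne_of_ne hab hac, Equiv.swap_apply_left,
      Equiv.swap_apply_right] at this
  have pbac : (Pat a b c).card = (Pat b a c).card := by
    have := pat_shift (Equiv.swap a b) a b c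
    rwa [Equiv.swap_apply_left, Equiv.swap_apply_right,
      Equiv.swap_apply_of_ne_of_ne hac.symm hbc.symm] at this
  have pcba : (Pat a b c).card = (Pat c b a).card := by
    have := pat_shift (Equiv.swap a c) a b c
    rwa [Equiv.swap_apply_left, Equiv.swap_apply_right,
      Equiv.swap_apply_of_ne_of_ne hab.symm hbc] at this
  have pcab : (Pat a b c).card = (Pat c a b).card := by
    have := pat_shift (Equiv.swap a c) a c b
    rw [Equiv.swap_apply_left, Equiv.swap_apply_right,
      Equiv.swap_apply_of_ne_of_ne hab.symm hbc] at this
    rw [pacb, this]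
  have pbca : (Pat a b c).card = (Pat b c a).card := by
    have := pat_shift (Equiv.swap a b) a c b
    rw [Equiv.swap_apply_left, Equiv.swap_apply_right,
      Equiv.swap_apply_of_ne_of_ne hac.symm hbc.symm] at this
    rw [pacb, this]
  have tot : (univ : Finset (Perm (Fin n))).card = n.factorial := by
    simp [Finset.card_univ, Fintype.card_perm]
  omega

lemma card_quarter (a b c d : Fin n) (hab : a ≠ b) (hcd : c ≠ d)
    (hac : a ≠ c) (had : a ≠ d) (hbc : b ≠ c) (hbd : b ≠ d) :
    4 * (univ.filter (fun v : Perm (Fin n) => v⁻¹ a < v⁻¹ b ∧ v⁻¹ c < v⁻¹ d)).card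
      = n.factorial := by
  have tri : ∀ (v : Perm (Fin n)) (x y : Fin n), x ≠ y → (¬ v⁻¹ x < v⁻¹ y ↔ v⁻¹ y < v⁻¹ x) := by
    intro v x y h
    constructor
    · intro hh
      exact lt_of_le_of_ne (not_lt.1 hh) (fun e => h (v⁻¹.injective e.symm))
    · exact fun hh => not_lt.2 hh.le
  have hswap : (univ.filter (fun v : Perm (Fin n) => v⁻¹ a < v⁻¹ b ∧ v⁻¹ c < v⁻¹ d)).card
      = (univ.filter (fun v : Perm (Fin n) => v⁻¹ a < v⁻¹ b ∧ v⁻¹ d < v⁻¹ c)).card := by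
    apply card_shift (Equiv.swap c d)
    intro v
    simp only [mul_inv_rev, Equiv.Perm.mul_apply]
    rw [Equiv.swap_inv, Equiv.swap_apply_of_ne_of_ne hac had,
      Equiv.swap_apply_of_ne_of_ne hbc hbd, Equiv.swap_apply_left, Equiv.swap_apply_right]
  have hsplit := split_card (univ : Finset (Perm (Fin n)))
    (fun v => v⁻¹ a < v⁻¹ b) (fun v => v⁻¹ c < v⁻¹ d)
  have hcongr : (univ.filter fun v : Perm (Fin n) => v⁻¹ a < v⁻¹ b ∧ ¬ v⁻¹ c < v⁻¹ d)
      = (univ.filter fun v : Perm (Fin n) => v⁻¹ a < v⁻¹ b ∧ v⁻¹ d < v⁻¹ c) := by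
    apply filter_congr
    intro v _
    rw [tri v c d hcd]
  have hhalf : 2 * (univ.filter (fun v : Perm (Fin n) => v⁻¹ a < v⁻¹ b)).card = n.factorial := by
    -- copy of card_half
    have h1 : (univ.filter (fun v : Perm (Fin n) => v⁻¹ a < v⁻¹ b)).card
        = (univ.filter (fun v : Perm (Fin n) => v⁻¹ b < v⁻¹ a)).card := by
      apply card_shift (Equiv.swap a b)
      intro v
      simp [mul_inv_rev, Equiv.Perm.mul_apply, Equiv.swap_apply_left, Equiv.swap_apply_right]
    have h2 : (univ.filter (fun v : Perm (Fin n) => v⁻¹ b < v⁻¹ a))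
        = (univ.filter (fun v : Perm (Fin n) => ¬ v⁻¹ a < v⁻¹ b)) := by
      apply filter_congr
      intro v _
      rw [tri v a b hab]
    have h3 := Finset.card_filter_add_card_filter_not
      (s := (univ : Finset (Perm (Fin n)))) (p := fun v => v⁻¹ a < v⁻¹ b)
    rw [two_mul]
    calc _ = (univ.filter (fun v : Perm (Fin n) => v⁻¹ a < v⁻¹ b)).card
        + (univ.filter (fun v : Perm (Fin n) => ¬ v⁻¹ a < v⁻¹ b)).card := by rw [← h2, ← h1]
      _ = (univ : Finset (Perm (Fin n))).card := h3
      _ = n.factorial := by simp [Finset.card_univ, Fintype.card_perm]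
  rw [hcongr, ← hswap] at hsplit
  omega

lemma card_half (a b : Fin n) (hab : a ≠ b) :
    2 * (univ.filter (fun v : Perm (Fin n) => v⁻¹ a < v⁻¹ b)).card = n.factorial := by
  have h1 : (univ.filter (fun v : Perm (Fin n) => v⁻¹ a < v⁻¹ b)).card
      = (univ.filter (fun v : Perm (Fin n) => v⁻¹ b < v⁻¹ a)).card := by
    apply card_shift (Equiv.swap a b)
    intro v
    simp [mul_inv_rev, Equiv.Perm.mul_apply, Equiv.swap_apply_left, Equiv.swap_apply_right]
  have h2 : (univ.filter (fun v : Perm (Fin n) => v⁻¹ b < v⁻¹ a))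
      = (univ.filter (fun v : Perm (Fin n) => ¬ v⁻¹ a < v⁻¹ b)) := by
    apply filter_congr
    intro v _
    have : v⁻¹ a ≠ v⁻¹ b := fun e => hab (v⁻¹.injective e)
    constructor
    · exact fun h => not_lt.2 h.le
    · intro h; exact lt_of_le_of_ne (not_lt.1 h) (Ne.symm this)
  have h3 := Finset.card_filter_add_card_filter_not
    (s := (univ : Finset (Perm (Fin n)))) (p := fun v => v⁻¹ a < v⁻¹ b)
  rw [two_mul]
  calc _ = (univ.filter (fun v : Perm (Fin n) => v⁻¹ a < v⁻¹ b)).card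
      + (univ.filter (fun v : Perm (Fin n) => ¬ v⁻¹ a < v⁻¹ b)).card := by rw [← h2, ← h1]
    _ = (univ : Finset (Perm (Fin n))).card := h3
    _ = n.factorial := by simp [Finset.card_univ, Fintype.card_perm]

variable (w : Perm (Fin n))

/-- the orbit of a point -/
def orb (a : Fin n) : Finset (Fin n) := univ.filter (fun j => w.SameCycle a j)

lemma mem_orb {a j : Fin n} : j ∈ orb w a ↔ w.SameCycle a j := by
  simp [orb]

lemma orb_eq_of_sameCycle {a b : Fin n} (h : w.SameCycle a b) : orb w a = orb w b := by
  ext j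
  simp only [mem_orb]
  exact ⟨fun hj => h.symm.trans hj, fun hj => h.trans hj⟩

lemma orb_fixed {a : Fin n} (h : w a = a) : orb w a = {a} := by
  ext j
  simp only [mem_orb, Finset.mem_singleton]
  constructor
  · rintro ⟨k, hk⟩
    rw [← hk, Equiv.Perm.zpow_apply_eq_self_of_apply_eq_self h k]
  · rintro rfl; exact Equiv.Perm.SameCycle.refl w _

lemma orb_two {a : Fin n} (h1 : w a ≠ a) (h2 : w (w a) = a) : orb w a = {a, w a} := by
  ext j
  simp only [mem_orb, Finset.mem_insert, Finset.mem_singleton]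
  constructor
  · rintro ⟨k, hk⟩
    have hsq : ∀ m : ℤ, ((w ^ (2:ℤ)) ^ m) a = a := by
      intro m
      apply Equiv.Perm.zpow_apply_eq_self_of_apply_eq_self
      simpa [show ((2:ℤ):ℤ) = (2:ℤ) from rfl, zpow_two, pow_two, Equiv.Perm.mul_apply] using h2
    have hk2 : (w ^ k) a = (w ^ (k % 2)) a := by
      conv_lhs => rw [← Int.emod_add_mul_ediv k 2]
      rw [zpow_add, Equiv.Perm.mul_apply, zpow_mul, hsq]
    rcases Int.emod_two_eq k with he | he
    · left; rw [← hk, hk2, he]; simp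
    · right; rw [← hk, hk2, he]; simp
  · rintro (rfl | rfl)
    · exact Equiv.Perm.SameCycle.refl w _
    · exact ⟨1, by simp⟩

lemma mem_cyclesOf {C : Finset (Fin n)} : C ∈ cyclesOf w ↔ ∃ b, C = orb w b := by
  simp only [cyclesOf, Finset.mem_image, Finset.mem_univ, true_and]
  constructor
  · rintro ⟨b, hb⟩; exact ⟨b, hb.symm⟩
  · rintro ⟨b, hb⟩; exact ⟨b, hb.symm⟩

lemma sc_apply_self (a : Fin n) : w.SameCycle a (w a) := ⟨1, by simp⟩

lemma numCycLen_one : numCycLen w 1 = (univ.filter (fun a => w a = a)).card := by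
  rw [numCycLen]
  symm
  apply Finset.card_bij (fun a _ => ({a} : Finset (Fin n)))
  · intro a ha
    simp only [mem_filter, mem_univ, true_and] at ha ⊢
    refine ⟨?_, Finset.card_singleton a⟩
    rw [mem_cyclesOf]
    exact ⟨a, (orb_fixed w ha).symm⟩
  · intro a _ a' _ h
    exact Finset.singleton_inj.1 h
  · intro C hC
    simp only [mem_filter] at hC
    obtain ⟨hC1, hC2⟩ := hC
    obtain ⟨b, rfl⟩ := (mem_cyclesOf w).1 hC1
    obtain ⟨x, hx⟩ := Finset.card_eq_one.1 hC2
    have hb : b ∈ orb w b := (mem_orb w).2 (Equiv.Perm.SameCycle.refl w b)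
    have hbx : b = x := by rw [hx] at hb; exact Finset.mem_singleton.1 hb
    subst hbx
    have hwb : w b ∈ orb w b := (mem_orb w).2 (sc_apply_self w b)
    have : w b = b := by rw [hx] at hwb; exact Finset.mem_singleton.1 hwb
    refine ⟨b, ?_, ?_⟩
    · simp [this]
    · rw [hx]

lemma numCycLen_two :
    2 * numCycLen w 2 = (univ.filter (fun a => w a ≠ a ∧ w (w a) = a)).card := by
  classical
  have horb2 : ∀ a : Fin n, w a ≠ a → w (w a) = a → (orb w a).card = 2 := by
    intro a h1 h2
    rw [orb_two w h1 h2]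
    rw [Finset.card_insert_of_notMem (by simp [Ne.symm h1]), Finset.card_singleton]
  have key : ((cyclesOf w).filter (fun C => C.card = 2)).biUnion (fun C => C)
      = univ.filter (fun a => w a ≠ a ∧ w (w a) = a) := by
    ext a
    simp only [Finset.mem_biUnion, mem_filter, mem_univ, true_and]
    constructor
    · rintro ⟨C, ⟨hC1, hC2⟩, ha⟩
      obtain ⟨b, rfl⟩ := (mem_cyclesOf w).1 hC1
      have hoa : orb w a = orb w b := (orb_eq_of_sameCycle w ((mem_orb w).1 ha)).symm
      have hcard : (orb w a).card = 2 := by rw [hoa, hC2]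
      have h1 : w a ≠ a := by
        intro h
        rw [orb_fixed w h] at hcard
        simp at hcard
      have hsub : ({a, w a} : Finset (Fin n)) ⊆ orb w a := by
        intro x hx
        rcases Finset.mem_insert.1 hx with rfl | hx
        · exact (mem_orb w).2 (Equiv.Perm.SameCycle.refl w _)
        · rw [Finset.mem_singleton.1 hx]
          exact (mem_orb w).2 (sc_apply_self w a)
      have hpair : orb w a = {a, w a} := by
        symm
        apply Finset.eq_of_subset_of_card_le hsub
        rw [hcard]
        rw [Finset.card_insert_of_notMem (by simp [Ne.symm h1]), Finset.card_singleton]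
      refine ⟨h1, ?_⟩
      have : w (w a) ∈ orb w a := (mem_orb w).2 ((sc_apply_self w a).trans (sc_apply_self w (w a)))
      rw [hpair] at this
      rcases Finset.mem_insert.1 this with h | h
      · exact h
      · exact absurd (w.injective (Finset.mem_singleton.1 h)) h1
    · rintro ⟨h1, h2⟩
      refine ⟨orb w a, ⟨(mem_cyclesOf w).2 ⟨a, rfl⟩, horb2 a h1 h2⟩, (mem_orb w).2 (Equiv.Perm.SameCycle.refl w _)⟩
  have hdisj : ∀ C1 ∈ (cyclesOf w).filter (fun C => C.card = 2),
      ∀ C2 ∈ (cyclesOf w).filter (fun C => C.card = 2), C1 ≠ C2 → Disjoint C1 C2 := by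
    intro C1 h1 C2 h2 hne
    obtain ⟨b1, rfl⟩ := (mem_cyclesOf w).1 (Finset.mem_of_mem_filter _ h1)
    obtain ⟨b2, rfl⟩ := (mem_cyclesOf w).1 (Finset.mem_of_mem_filter _ h2)
    rw [Finset.disjoint_left]
    intro x hx1 hx2
    exact hne ((orb_eq_of_sameCycle w ((mem_orb w).1 hx1)).trans
      (orb_eq_of_sameCycle w ((mem_orb w).1 hx2)).symm)
  rw [← key, Finset.card_biUnion hdisj]
  rw [Finset.sum_congr rfl (fun C hC => (Finset.mem_filter.1 hC).2)]
  rw [Finset.sum_const, numCycLen]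
  ring

lemma exc_conj (w v : Perm (Fin n)) :
    excStat (v⁻¹ * w * v) = (univ.filter (fun a => v⁻¹ a < v⁻¹ (w a))).card := by
  rw [excStat]
  apply Finset.card_bij (fun i _ => v i)
  · intro i hi
    simp only [mem_filter, mem_univ, true_and, Equiv.Perm.mul_apply] at hi ⊢
    simpa using (Finset.mem_filter.1 hi).2
  · intro i _ i' _ h
    exact v.injective h
  · intro a ha
    simp only [mem_filter, mem_univ, true_and, Equiv.Perm.mul_apply] at ha ⊢
    exact ⟨v⁻¹ a, Finset.mem_filter.2 ⟨mem_univ _, by simpa using ha⟩, by simp⟩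

lemma sum_exc (w : Perm (Fin n)) :
    ∑ v : Perm (Fin n), excStat (v⁻¹ * w * v)
      = ∑ a : Fin n, (univ.filter (fun v : Perm (Fin n) => v⁻¹ a < v⁻¹ (w a))).card := by
  have h : ∀ v : Perm (Fin n), excStat (v⁻¹ * w * v)
      = ∑ a : Fin n, if v⁻¹ a < v⁻¹ (w a) then 1 else 0 := by
    intro v
    rw [exc_conj, Finset.card_filter]
  rw [Finset.sum_congr rfl (fun v _ => h v), Finset.sum_comm]
  congr 1
  ext a
  rw [Finset.card_filter]

lemma sum_exc_sq (w : Perm (Fin n)) :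
    ∑ v : Perm (Fin n), (excStat (v⁻¹ * w * v)) ^ 2
      = ∑ q : Fin n × Fin n,
        (univ.filter (fun v : Perm (Fin n) =>
          v⁻¹ q.1 < v⁻¹ (w q.1) ∧ v⁻¹ q.2 < v⁻¹ (w q.2))).card := by
  have h : ∀ v : Perm (Fin n), (excStat (v⁻¹ * w * v)) ^ 2
      = ∑ q : Fin n × Fin n,
        if v⁻¹ q.1 < v⁻¹ (w q.1) ∧ v⁻¹ q.2 < v⁻¹ (w q.2) then 1 else 0 := by
    intro v
    rw [exc_conj, pow_two, ← Finset.card_product]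
    have : (univ.filter (fun a => v⁻¹ a < v⁻¹ (w a))) ×ˢ (univ.filter (fun a => v⁻¹ a < v⁻¹ (w a)))
        = (univ : Finset (Fin n × Fin n)).filter
          (fun q => v⁻¹ q.1 < v⁻¹ (w q.1) ∧ v⁻¹ q.2 < v⁻¹ (w q.2)) := by
      ext q
      simp [Finset.mem_product, and_assoc]
    rw [this, Finset.card_filter]
  rw [Finset.sum_congr rfl (fun v _ => h v), Finset.sum_comm]
  congr 1
  ext q
  rw [Finset.card_filter]

lemma sum_split {α : Type*} [DecidableEq α] (s : Finset α) (p q : α → Prop)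
    [DecidablePred p] [DecidablePred q] (f : α → ℕ) :
    ∑ x ∈ s.filter p, f x
      = ∑ x ∈ s.filter (fun x => p x ∧ q x), f x + ∑ x ∈ s.filter (fun x => p x ∧ ¬ q x), f x := by
  rw [← Finset.sum_filter_add_sum_filter_not (s.filter p) q,
    Finset.filter_filter, Finset.filter_filter]

def cnt2 (w : Perm (Fin n)) (a b : Fin n) : ℕ :=
  (univ.filter (fun v : Perm (Fin n) => v⁻¹ a < v⁻¹ (w a) ∧ v⁻¹ b < v⁻¹ (w b))).card

lemma cnt2_zero_left {a : Fin n} (b : Fin n) (ha : w a = a) : cnt2 w a b = 0 := by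
  rw [cnt2, Finset.card_eq_zero, Finset.filter_eq_empty_iff]
  intro v _
  rw [ha]
  simp

lemma cnt2_zero_right (a : Fin n) {b : Fin n} (hb : w b = b) : cnt2 w a b = 0 := by
  rw [cnt2, Finset.card_eq_zero, Finset.filter_eq_empty_iff]
  intro v _
  rw [hb]
  simp

lemma cnt2_diag {a : Fin n} (ha : w a ≠ a) : 2 * cnt2 w a a = n.factorial := by
  rw [cnt2]
  have he : (univ.filter (fun v : Perm (Fin n) => v⁻¹ a < v⁻¹ (w a) ∧ v⁻¹ a < v⁻¹ (w a)))
      = univ.filter (fun v : Perm (Fin n) => v⁻¹ a < v⁻¹ (w a)) := by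
    apply filter_congr; intro v _; simp
  rw [he]
  exact card_half a (w a) (fun h => ha h.symm)

lemma cnt2_twocycle {a b : Fin n} (hb : b = w a) (hab : a = w b) : cnt2 w a b = 0 := by
  rw [cnt2, Finset.card_eq_zero, Finset.filter_eq_empty_iff]
  intro v _
  rw [← hb, ← hab]
  rintro ⟨h1, h2⟩
  exact absurd (h1.trans h2) (lt_irrefl _)

lemma cnt2_adj {a b : Fin n} (hb : b = w a) (h1 : w a ≠ a) (h2 : w b ≠ b) (h3 : a ≠ w b) :
    6 * cnt2 w a b = n.factorial := by
  subst hb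
  exact card_sixth a (w a) (w (w a)) (fun h => h1 h.symm) (fun h => h2 h.symm) h3

lemma cnt2_adj' {a b : Fin n} (ha : a = w b) (h2 : w b ≠ b) (h1 : w a ≠ a) (h3 : b ≠ w a) :
    6 * cnt2 w a b = n.factorial := by
  subst ha
  rw [cnt2]
  have he : (univ.filter (fun v : Perm (Fin n) => v⁻¹ (w b) < v⁻¹ (w (w b)) ∧ v⁻¹ b < v⁻¹ (w b)))
      = Pat b (w b) (w (w b)) := by
    rw [Pat]
    apply filter_congr
    intro v _
    constructor
    · rintro ⟨x, y⟩; exact ⟨y, x⟩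
    · rintro ⟨x, y⟩; exact ⟨y, x⟩
  rw [he]
  exact card_sixth b (w b) (w (w b)) (fun h => h2 h.symm) (fun h => h1 h.symm) h3

lemma cnt2_generic {a b : Fin n} (h1 : w a ≠ a) (h2 : w b ≠ b) (hab : a ≠ b)
    (h3 : b ≠ w a) (h4 : a ≠ w b) : 4 * cnt2 w a b = n.factorial :=
  card_quarter a (w a) b (w b) (fun h => h1 h.symm) (fun h => h2 h.symm) hab h4
    (fun h => h3 h.symm) (fun e => hab (w.injective e))

lemma moment1 (w : Perm (Fin n)) :
    2 * ∑ v : Perm (Fin n), excStat (v⁻¹ * w * v)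
      = (univ.filter (fun a => w a ≠ a)).card * n.factorial := by
  rw [sum_exc, Finset.mul_sum,
    ← Finset.sum_filter_add_sum_filter_not univ (fun a => w a ≠ a)
      (fun a => 2 * (univ.filter (fun v : Perm (Fin n) => v⁻¹ a < v⁻¹ (w a))).card)]
  have hz : ∑ a ∈ univ.filter (fun a => ¬ w a ≠ a),
      2 * (univ.filter (fun v : Perm (Fin n) => v⁻¹ a < v⁻¹ (w a))).card = 0 := by
    apply Finset.sum_eq_zero
    intro a ha
    simp only [mem_filter, not_not, mem_univ, true_and] at ha
    rw [ha]
    simp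
  have hs : ∀ a ∈ univ.filter (fun a => w a ≠ a),
      2 * (univ.filter (fun v : Perm (Fin n) => v⁻¹ a < v⁻¹ (w a))).card = n.factorial := by
    intro a ha
    have h2 : w a ≠ a := (Finset.mem_filter.1 ha).2
    exact card_half a (w a) (fun h => h2 h.symm)
  rw [hz, add_zero, Finset.sum_congr rfl hs, Finset.sum_const, smul_eq_mul]

/-- region predicates on pairs -/
def predR (w : Perm (Fin n)) (q : Fin n × Fin n) : Prop := w q.1 ≠ q.1 ∧ w q.2 ≠ q.2

instance (w : Perm (Fin n)) : DecidablePred (predR w) := fun q => by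
  unfold predR; infer_instance

lemma moment2 (w : Perm (Fin n)) :
    12 * ∑ v : Perm (Fin n), (excStat (v⁻¹ * w * v)) ^ 2
      = 6 * n.factorial * (univ.filter (fun a => w a ≠ a)).card
        + 2 * n.factorial * (univ.filter (fun q : Fin n × Fin n =>
            ((predR w q ∧ ¬ q.1 = q.2) ∧ q.2 = w q.1) ∧ ¬ q.1 = w q.2)).card
        + 2 * n.factorial * (univ.filter (fun q : Fin n × Fin n =>
            ((predR w q ∧ ¬ q.1 = q.2) ∧ ¬ q.2 = w q.1) ∧ q.1 = w q.2)).card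
        + 3 * n.factorial * (univ.filter (fun q : Fin n × Fin n =>
            ((predR w q ∧ ¬ q.1 = q.2) ∧ ¬ q.2 = w q.1) ∧ ¬ q.1 = w q.2)).card := by
  rw [sum_exc_sq, Finset.mul_sum]
  have hsplit0 := Finset.sum_filter_add_sum_filter_not (univ : Finset (Fin n × Fin n)) (predR w)
    (fun q => 12 * (univ.filter (fun v : Perm (Fin n) =>
      v⁻¹ q.1 < v⁻¹ (w q.1) ∧ v⁻¹ q.2 < v⁻¹ (w q.2))).card)
  rw [← hsplit0]
  have hz : ∑ q ∈ univ.filter (fun q : Fin n × Fin n => ¬ predR w q),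
      12 * (univ.filter (fun v : Perm (Fin n) =>
        v⁻¹ q.1 < v⁻¹ (w q.1) ∧ v⁻¹ q.2 < v⁻¹ (w q.2))).card = 0 := by
    apply Finset.sum_eq_zero
    intro q hq
    have h : ¬ predR w q := (Finset.mem_filter.1 hq).2
    rw [predR, not_and_or] at h
    rcases h with h | h
    · rw [show (univ.filter (fun v : Perm (Fin n) =>
          v⁻¹ q.1 < v⁻¹ (w q.1) ∧ v⁻¹ q.2 < v⁻¹ (w q.2))).card = cnt2 w q.1 q.2 from rfl,
        cnt2_zero_left w q.2 (not_not.1 h), mul_zero]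
    · rw [show (univ.filter (fun v : Perm (Fin n) =>
          v⁻¹ q.1 < v⁻¹ (w q.1) ∧ v⁻¹ q.2 < v⁻¹ (w q.2))).card = cnt2 w q.1 q.2 from rfl,
        cnt2_zero_right w q.1 (not_not.1 h), mul_zero]
  rw [hz, add_zero]
  rw [sum_split (univ : Finset (Fin n × Fin n)) (predR w) (fun q => q.1 = q.2)]
  rw [sum_split (univ : Finset (Fin n × Fin n)) (fun q => predR w q ∧ ¬ q.1 = q.2)
    (fun q => q.2 = w q.1)]
  rw [sum_split (univ : Finset (Fin n × Fin n)) (fun q => (predR w q ∧ ¬ q.1 = q.2) ∧ q.2 = w q.1)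
    (fun q => q.1 = w q.2)]
  rw [sum_split (univ : Finset (Fin n × Fin n)) (fun q => (predR w q ∧ ¬ q.1 = q.2) ∧ ¬ q.2 = w q.1)
    (fun q => q.1 = w q.2)]
  -- diagonal part
  have e0 : ∑ q ∈ univ.filter (fun q : Fin n × Fin n => predR w q ∧ q.1 = q.2),
      12 * (univ.filter (fun v : Perm (Fin n) =>
        v⁻¹ q.1 < v⁻¹ (w q.1) ∧ v⁻¹ q.2 < v⁻¹ (w q.2))).card
      = 6 * n.factorial * (univ.filter (fun a => w a ≠ a)).card := by
    have hc : ∀ q ∈ univ.filter (fun q : Fin n × Fin n => predR w q ∧ q.1 = q.2),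
        12 * (univ.filter (fun v : Perm (Fin n) =>
          v⁻¹ q.1 < v⁻¹ (w q.1) ∧ v⁻¹ q.2 < v⁻¹ (w q.2))).card = 6 * n.factorial := by
      intro q hq
      obtain ⟨⟨h1, _⟩, he⟩ := (Finset.mem_filter.1 hq).2
      rw [show (univ.filter (fun v : Perm (Fin n) =>
        v⁻¹ q.1 < v⁻¹ (w q.1) ∧ v⁻¹ q.2 < v⁻¹ (w q.2))).card = cnt2 w q.1 q.2 from rfl, ← he]
      rw [show (12 : ℕ) = 6 * 2 by norm_num, mul_assoc, cnt2_diag w h1]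
    rw [Finset.sum_congr rfl hc, Finset.sum_const, smul_eq_mul, mul_comm]
    congr 1
    apply Finset.card_bij (fun q _ => q.1)
    · intro q hq
      obtain ⟨⟨h1, _⟩, _⟩ := (Finset.mem_filter.1 hq).2
      simp only [mem_filter, mem_univ, true_and]
      exact h1
    · intro q hq q' hq' h
      have e1 := ((Finset.mem_filter.1 hq).2).2
      have e2 := ((Finset.mem_filter.1 hq').2).2
      exact Prod.ext h (by rw [← e1, ← e2, h])
    · intro a ha
      have h1 : w a ≠ a := (Finset.mem_filter.1 ha).2
      exact ⟨(a, a), Finset.mem_filter.2 ⟨Finset.mem_univ _, ⟨⟨h1, h1⟩, rfl⟩⟩, rfl⟩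
  -- two-cycle part : zero
  have e1 : ∑ q ∈ univ.filter (fun q : Fin n × Fin n =>
      ((predR w q ∧ ¬ q.1 = q.2) ∧ q.2 = w q.1) ∧ q.1 = w q.2),
      12 * (univ.filter (fun v : Perm (Fin n) =>
        v⁻¹ q.1 < v⁻¹ (w q.1) ∧ v⁻¹ q.2 < v⁻¹ (w q.2))).card = 0 := by
    apply Finset.sum_eq_zero
    intro q hq
    obtain ⟨⟨_, hw⟩, ha⟩ := (Finset.mem_filter.1 hq).2
    rw [show (univ.filter (fun v : Perm (Fin n) =>
      v⁻¹ q.1 < v⁻¹ (w q.1) ∧ v⁻¹ q.2 < v⁻¹ (w q.2))).card = cnt2 w q.1 q.2 from rfl,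
      cnt2_twocycle w hw ha, mul_zero]
  -- adjacent parts
  have e2 : ∑ q ∈ univ.filter (fun q : Fin n × Fin n =>
      ((predR w q ∧ ¬ q.1 = q.2) ∧ q.2 = w q.1) ∧ ¬ q.1 = w q.2),
      12 * (univ.filter (fun v : Perm (Fin n) =>
        v⁻¹ q.1 < v⁻¹ (w q.1) ∧ v⁻¹ q.2 < v⁻¹ (w q.2))).card
      = 2 * n.factorial * (univ.filter (fun q : Fin n × Fin n =>
          ((predR w q ∧ ¬ q.1 = q.2) ∧ q.2 = w q.1) ∧ ¬ q.1 = w q.2)).card := by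
    have hc : ∀ q ∈ univ.filter (fun q : Fin n × Fin n =>
        ((predR w q ∧ ¬ q.1 = q.2) ∧ q.2 = w q.1) ∧ ¬ q.1 = w q.2),
        12 * (univ.filter (fun v : Perm (Fin n) =>
          v⁻¹ q.1 < v⁻¹ (w q.1) ∧ v⁻¹ q.2 < v⁻¹ (w q.2))).card = 2 * n.factorial := by
      intro q hq
      obtain ⟨⟨⟨⟨h1, h2⟩, _⟩, hw⟩, ha⟩ := (Finset.mem_filter.1 hq).2
      rw [show (univ.filter (fun v : Perm (Fin n) =>
        v⁻¹ q.1 < v⁻¹ (w q.1) ∧ v⁻¹ q.2 < v⁻¹ (w q.2))).card = cnt2 w q.1 q.2 from rfl,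
        show (12 : ℕ) = 2 * 6 by norm_num, mul_assoc, cnt2_adj w hw h1 h2 ha]
    rw [Finset.sum_congr rfl hc, Finset.sum_const, smul_eq_mul, mul_comm]
  have e3 : ∑ q ∈ univ.filter (fun q : Fin n × Fin n =>
      ((predR w q ∧ ¬ q.1 = q.2) ∧ ¬ q.2 = w q.1) ∧ q.1 = w q.2),
      12 * (univ.filter (fun v : Perm (Fin n) =>
        v⁻¹ q.1 < v⁻¹ (w q.1) ∧ v⁻¹ q.2 < v⁻¹ (w q.2))).card
      = 2 * n.factorial * (univ.filter (fun q : Fin n × Fin n =>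
          ((predR w q ∧ ¬ q.1 = q.2) ∧ ¬ q.2 = w q.1) ∧ q.1 = w q.2)).card := by
    have hc : ∀ q ∈ univ.filter (fun q : Fin n × Fin n =>
        ((predR w q ∧ ¬ q.1 = q.2) ∧ ¬ q.2 = w q.1) ∧ q.1 = w q.2),
        12 * (univ.filter (fun v : Perm (Fin n) =>
          v⁻¹ q.1 < v⁻¹ (w q.1) ∧ v⁻¹ q.2 < v⁻¹ (w q.2))).card = 2 * n.factorial := by
      intro q hq
      obtain ⟨⟨⟨⟨h1, h2⟩, _⟩, hw⟩, ha⟩ := (Finset.mem_filter.1 hq).2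
      rw [show (univ.filter (fun v : Perm (Fin n) =>
        v⁻¹ q.1 < v⁻¹ (w q.1) ∧ v⁻¹ q.2 < v⁻¹ (w q.2))).card = cnt2 w q.1 q.2 from rfl,
        show (12 : ℕ) = 2 * 6 by norm_num, mul_assoc, cnt2_adj' w ha h2 h1 hw]
    rw [Finset.sum_congr rfl hc, Finset.sum_const, smul_eq_mul, mul_comm]
  -- generic part
  have e4 : ∑ q ∈ univ.filter (fun q : Fin n × Fin n =>
      ((predR w q ∧ ¬ q.1 = q.2) ∧ ¬ q.2 = w q.1) ∧ ¬ q.1 = w q.2),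
      12 * (univ.filter (fun v : Perm (Fin n) =>
        v⁻¹ q.1 < v⁻¹ (w q.1) ∧ v⁻¹ q.2 < v⁻¹ (w q.2))).card
      = 3 * n.factorial * (univ.filter (fun q : Fin n × Fin n =>
          ((predR w q ∧ ¬ q.1 = q.2) ∧ ¬ q.2 = w q.1) ∧ ¬ q.1 = w q.2)).card := by
    have hc : ∀ q ∈ univ.filter (fun q : Fin n × Fin n =>
        ((predR w q ∧ ¬ q.1 = q.2) ∧ ¬ q.2 = w q.1) ∧ ¬ q.1 = w q.2),
        12 * (univ.filter (fun v : Perm (Fin n) =>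
          v⁻¹ q.1 < v⁻¹ (w q.1) ∧ v⁻¹ q.2 < v⁻¹ (w q.2))).card = 3 * n.factorial := by
      intro q hq
      obtain ⟨⟨⟨⟨h1, h2⟩, hne⟩, hw⟩, ha⟩ := (Finset.mem_filter.1 hq).2
      rw [show (univ.filter (fun v : Perm (Fin n) =>
        v⁻¹ q.1 < v⁻¹ (w q.1) ∧ v⁻¹ q.2 < v⁻¹ (w q.2))).card = cnt2 w q.1 q.2 from rfl,
        show (12 : ℕ) = 3 * 4 by norm_num, mul_assoc, cnt2_generic w h1 h2 hne hw ha]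
    rw [Finset.sum_congr rfl hc, Finset.sum_const, smul_eq_mul, mul_comm]
  rw [e0, e1, e2, e3, e4]
  ring

lemma splitCardGen {α : Type*} [DecidableEq α] (s : Finset α) (p q : α → Prop)
    [DecidablePred p] [DecidablePred q] :
    (s.filter p).card
      = (s.filter fun v => p v ∧ q v).card + (s.filter fun v => p v ∧ ¬ q v).card := by
  rw [← Finset.card_filter_add_card_filter_not (s := s.filter p) (p := q),
    Finset.filter_filter, Finset.filter_filter]

lemma cardP0' (w : Perm (Fin n)) :
    (univ.filter (fun q : Fin n × Fin n => predR w q ∧ q.1 = q.2)).card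
      = (univ.filter (fun a => w a ≠ a)).card := by
  apply Finset.card_bij (fun q _ => q.1)
  · intro q hq
    obtain ⟨⟨h1, _⟩, _⟩ := (Finset.mem_filter.1 hq).2
    simp only [mem_filter, mem_univ, true_and]
    exact h1
  · intro q hq q' hq' h
    have e1 := ((Finset.mem_filter.1 hq).2).2
    have e2 := ((Finset.mem_filter.1 hq').2).2
    exact Prod.ext h (by rw [← e1, ← e2, h])
  · intro a ha
    have h1 : w a ≠ a := (Finset.mem_filter.1 ha).2
    exact ⟨(a, a), Finset.mem_filter.2 ⟨Finset.mem_univ _, ⟨⟨h1, h1⟩, rfl⟩⟩, rfl⟩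

lemma cardP1' (w : Perm (Fin n)) :
    (univ.filter (fun q : Fin n × Fin n =>
        ((predR w q ∧ ¬ q.1 = q.2) ∧ q.2 = w q.1) ∧ q.1 = w q.2)).card
      = (univ.filter (fun a => w a ≠ a ∧ w (w a) = a)).card := by
  symm
  apply Finset.card_bij (fun a _ => ((a, w a) : Fin n × Fin n))
  · intro a ha
    obtain ⟨h1, h2⟩ := (Finset.mem_filter.1 ha).2
    refine Finset.mem_filter.2 ⟨Finset.mem_univ _, ?_⟩
    exact ⟨⟨⟨⟨h1, fun e => h1 (w.injective e)⟩, fun e => h1 e.symm⟩, rfl⟩, h2.symm⟩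
  · intro a _ a' _ h
    exact congrArg Prod.fst h
  · rintro ⟨x, y⟩ hq
    obtain ⟨⟨⟨⟨h1, _⟩, _⟩, hw⟩, ha⟩ := (Finset.mem_filter.1 hq).2
    simp only at hw ha h1
    subst hw
    refine ⟨x, Finset.mem_filter.2 ⟨Finset.mem_univ _, ⟨h1, ha.symm⟩⟩, rfl⟩

lemma cardP2' (w : Perm (Fin n)) :
    (univ.filter (fun q : Fin n × Fin n =>
        ((predR w q ∧ ¬ q.1 = q.2) ∧ q.2 = w q.1) ∧ ¬ q.1 = w q.2)).card
      = (univ.filter (fun a => w a ≠ a ∧ ¬ w (w a) = a)).card := by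
  symm
  apply Finset.card_bij (fun a _ => ((a, w a) : Fin n × Fin n))
  · intro a ha
    obtain ⟨h1, h2⟩ := (Finset.mem_filter.1 ha).2
    refine Finset.mem_filter.2 ⟨Finset.mem_univ _, ?_⟩
    exact ⟨⟨⟨⟨h1, fun e => h1 (w.injective e)⟩, fun e => h1 e.symm⟩, rfl⟩, fun e => h2 e.symm⟩
  · intro a _ a' _ h
    exact congrArg Prod.fst h
  · rintro ⟨x, y⟩ hq
    obtain ⟨⟨⟨⟨h1, _⟩, _⟩, hw⟩, ha⟩ := (Finset.mem_filter.1 hq).2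
    simp only at hw ha h1
    subst hw
    refine ⟨x, Finset.mem_filter.2 ⟨Finset.mem_univ _, ⟨h1, fun e => ha e.symm⟩⟩, rfl⟩

lemma cardP3' (w : Perm (Fin n)) :
    (univ.filter (fun q : Fin n × Fin n =>
        ((predR w q ∧ ¬ q.1 = q.2) ∧ ¬ q.2 = w q.1) ∧ q.1 = w q.2)).card
      = (univ.filter (fun a => w a ≠ a ∧ ¬ w (w a) = a)).card := by
  symm
  apply Finset.card_bij (fun b _ => ((w b, b) : Fin n × Fin n))
  · intro b hb
    obtain ⟨h1, h2⟩ := (Finset.mem_filter.1 hb).2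
    refine Finset.mem_filter.2 ⟨Finset.mem_univ _, ?_⟩
    exact ⟨⟨⟨⟨fun e => h1 (w.injective e), h1⟩, fun e => h1 e⟩, fun e => h2 e.symm⟩, rfl⟩
  · intro b _ b' _ h
    exact congrArg Prod.snd h
  · rintro ⟨x, y⟩ hq
    obtain ⟨⟨⟨⟨_, h2⟩, _⟩, hw⟩, ha⟩ := (Finset.mem_filter.1 hq).2
    simp only at hw ha h2
    subst ha
    refine ⟨y, Finset.mem_filter.2 ⟨Finset.mem_univ _, ⟨h2, fun e => hw e.symm⟩⟩, rfl⟩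

lemma pair_count (w : Perm (Fin n)) :
    (univ.filter (fun a => w a ≠ a)).card * (univ.filter (fun a => w a ≠ a)).card
      = (univ.filter (fun q : Fin n × Fin n => predR w q ∧ q.1 = q.2)).card
      + ((univ.filter (fun q : Fin n × Fin n =>
            ((predR w q ∧ ¬ q.1 = q.2) ∧ q.2 = w q.1) ∧ q.1 = w q.2)).card
        + (univ.filter (fun q : Fin n × Fin n =>
            ((predR w q ∧ ¬ q.1 = q.2) ∧ q.2 = w q.1) ∧ ¬ q.1 = w q.2)).card
        + ((univ.filter (fun q : Fin n × Fin n =>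
            ((predR w q ∧ ¬ q.1 = q.2) ∧ ¬ q.2 = w q.1) ∧ q.1 = w q.2)).card
          + (univ.filter (fun q : Fin n × Fin n =>
            ((predR w q ∧ ¬ q.1 = q.2) ∧ ¬ q.2 = w q.1) ∧ ¬ q.1 = w q.2)).card)) := by
  have h0 : (univ.filter (fun q : Fin n × Fin n => predR w q)).card
      = (univ.filter (fun a => w a ≠ a)).card * (univ.filter (fun a => w a ≠ a)).card := by
    have : (univ : Finset (Fin n × Fin n)).filter (fun q => predR w q)
        = (univ.filter (fun a => w a ≠ a)) ×ˢ (univ.filter (fun a => w a ≠ a)) := by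
      rw [← Finset.univ_product_univ, ← Finset.filter_product]
      rfl
    rw [this, Finset.card_product]
  rw [← h0,
    splitCardGen (univ : Finset (Fin n × Fin n)) (fun q => predR w q) (fun q => q.1 = q.2),
    splitCardGen (univ : Finset (Fin n × Fin n)) (fun q => predR w q ∧ ¬ q.1 = q.2)
      (fun q => q.2 = w q.1),
    splitCardGen (univ : Finset (Fin n × Fin n)) (fun q => (predR w q ∧ ¬ q.1 = q.2) ∧ q.2 = w q.1)
      (fun q => q.1 = w q.2),
    splitCardGen (univ : Finset (Fin n × Fin n)) (fun q => (predR w q ∧ ¬ q.1 = q.2) ∧ ¬ q.2 = w q.1)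
      (fun q => q.1 = w q.2)]

end VarianceAux

/-- The Reynolds operator: `R f(w) = (1/n!) ∑_{v ∈ S_n} f(v⁻¹ w v)`. -/
noncomputable def reynolds {n : ℕ} (f : Equiv.Perm (Fin n) → ℝ)
    (w : Equiv.Perm (Fin n)) : ℝ :=
  (n.factorial : ℝ)⁻¹ * ∑ v : Equiv.Perm (Fin n), f (v⁻¹ * w * v)

/-- `R(exc²) − (R exc)² = (n − m_1 − 2m_2)/12`: the variance of the excedance statistic on
the conjugacy class of `w ∈ S_n` is `(n − m_1(w) − 2 m_2(w))/12`, where `m_1(w)` and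
`m_2(w)` are the numbers of fixed points and of 2-cycles of `w`. -/
theorem variance_exc {n : ℕ} (w : Equiv.Perm (Fin n)) :
    reynolds (fun u => (excStat u : ℝ) ^ 2) w - (reynolds (fun u => (excStat u : ℝ)) w) ^ 2 =
      ((n : ℝ) - numCycLen w 1 - 2 * numCycLen w 2) / 12 := by
  classical
  have hM1 := moment1 w
  have hM2 := moment2 w
  have hpair := pair_count w
  have hP0 := cardP0' w
  have hP1 := cardP1' w
  have hP2 := cardP2' w
  have hP3 := cardP3' w
  have hFD := splitCardGen (univ : Finset (Fin n)) (fun a => w a ≠ a) (fun a => w (w a) = a)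
  have hn : (univ.filter (fun a => w a ≠ a)).card + (univ.filter (fun a => w a = a)).card = n := by
    have h := Finset.card_filter_add_card_filter_not
      (s := (univ : Finset (Fin n))) (p := fun a => w a ≠ a)
    have he : (univ.filter (fun a => ¬ w a ≠ a)) = (univ.filter (fun a => w a = a)) := by
      apply filter_congr
      intro a _
      exact not_not
    rw [he] at h
    simpa using h
  have hm1 := numCycLen_one (w := w)
  have hm2 := numCycLen_two (w := w)
  have hNf : ((n.factorial : ℕ) : ℝ) ≠ 0 := Nat.cast_ne_zero.2 (Nat.factorial_ne_zero n)
  have c1 : ((∑ v : Equiv.Perm (Fin n), excStat (v⁻¹ * w * v) : ℕ) : ℝ)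
      = ∑ v : Equiv.Perm (Fin n), ((excStat (v⁻¹ * w * v) : ℝ)) := by
    push_cast
    rfl
  have c2 : ((∑ v : Equiv.Perm (Fin n), (excStat (v⁻¹ * w * v))^2 : ℕ) : ℝ)
      = ∑ v : Equiv.Perm (Fin n), ((excStat (v⁻¹ * w * v) : ℝ))^2 := by
    push_cast
    rfl
  simp only [reynolds]
  rw [← c1, ← c2]
  set S1 := ∑ v : Equiv.Perm (Fin n), excStat (v⁻¹ * w * v) with hS1def
  set S2 := ∑ v : Equiv.Perm (Fin n), (excStat (v⁻¹ * w * v))^2 with hS2def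
  set F := (univ.filter (fun a => w a ≠ a)).card with hFdef
  set M1 := (univ.filter (fun a => w a = a)).card with hM1def
  set D2 := (univ.filter (fun a => w a ≠ a ∧ w (w a) = a)).card with hD2def
  set D3 := (univ.filter (fun a => w a ≠ a ∧ ¬ w (w a) = a)).card with hD3def
  set P0c := (univ.filter (fun q : Fin n × Fin n => predR w q ∧ q.1 = q.2)).card
  set P1c := (univ.filter (fun q : Fin n × Fin n =>
      ((predR w q ∧ ¬ q.1 = q.2) ∧ q.2 = w q.1) ∧ q.1 = w q.2)).card
  set P2c := (univ.filter (fun q : Fin n × Fin n =>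
      ((predR w q ∧ ¬ q.1 = q.2) ∧ q.2 = w q.1) ∧ ¬ q.1 = w q.2)).card
  set P3c := (univ.filter (fun q : Fin n × Fin n =>
      ((predR w q ∧ ¬ q.1 = q.2) ∧ ¬ q.2 = w q.1) ∧ q.1 = w q.2)).card
  set P4c := (univ.filter (fun q : Fin n × Fin n =>
      ((predR w q ∧ ¬ q.1 = q.2) ∧ ¬ q.2 = w q.1) ∧ ¬ q.1 = w q.2)).card
  have hM1R : 2 * (S1 : ℝ) = F * n.factorial := by exact_mod_cast hM1
  have hM2R : 12 * (S2 : ℝ) = 6 * n.factorial * F + 2 * n.factorial * P2c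
      + 2 * n.factorial * P3c + 3 * n.factorial * P4c := by exact_mod_cast hM2
  have hpairR : (F : ℝ) * F = P0c + (P1c + P2c + (P3c + P4c)) := by exact_mod_cast hpair
  have hP0R : (P0c : ℝ) = F := by exact_mod_cast hP0
  have hP1R : (P1c : ℝ) = D2 := by exact_mod_cast hP1
  have hP2R : (P2c : ℝ) = D3 := by exact_mod_cast hP2
  have hP3R : (P3c : ℝ) = D3 := by exact_mod_cast hP3
  have hFDR : (F : ℝ) = D2 + D3 := by exact_mod_cast hFD
  have hnR : (F : ℝ) + M1 = n := by exact_mod_cast hn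
  have hm1R : (numCycLen w 1 : ℝ) = M1 := by exact_mod_cast hm1
  have hm2R : 2 * (numCycLen w 2 : ℝ) = D2 := by exact_mod_cast hm2
  have eS1 : (S1 : ℝ) = F * n.factorial / 2 := by linarith
  have eP4 : (P4c : ℝ) = F * F - F - D2 - 2 * D3 := by
    rw [hP0R, hP1R, hP2R, hP3R] at hpairR
    linarith
  have eS2 : (S2 : ℝ) = (6 * n.factorial * F + 2 * n.factorial * D3
      + 2 * n.factorial * D3 + 3 * n.factorial * (F * F - F - D2 - 2 * D3)) / 12 := by
    rw [hP2R, hP3R, eP4] at hM2R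
    linarith
  have eM1 : (M1 : ℝ) = n - F := by linarith
  have eD3 : (D3 : ℝ) = F - D2 := by linarith
  have em2 : ((numCycLen w 2 : ℕ) : ℝ) = D2 / 2 := by linarith
  rw [eS1, eS2, hm1R, eM1, em2, eD3]
  field_simp
  ring
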